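/- Let G be a connected simple graph. Then Δ(C(G)) + 1 ≤ χ''(C(G)) ≤ χ''_D(C(G)) ≤ Δ(C(G)) + 2; in particular, the total distinguishing chromatic number χ''_D(C(G)) of the central graph equals either Δ(C(G)) + 1 or Δ(C(G)) + 2. -/

import Mathlib

open SimpleGraph

/-- The subdivision graph `S(G)`: each edge `{u,v}` of `G` is replaced by a new
vertex (the element of `G.edgeSet`) adjacent to both `u` and `v`. -/
def subdivisionGraph {V : Type*} (G : SimpleGraph V) : SimpleGraph (V ⊕ G.edgeSet) where
  Adj x y :=
    match x, y with
    | Sum.inl u, Sum.inr e => u ∈ (e : Sym2 V)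
    | Sum.inr e, Sum.inl u => u ∈ (e : Sym2 V)
    | _, _ => False
  symm := Std.Symm.mk <| by rintro (u | e) (v | f) h <;> simp_all
  loopless := Std.Irrefl.mk <| by rintro (u | e) h <;> simp_all

/-- The central graph `C(G)`: obtained from the subdivision graph `S(G)` by joining
every pair of distinct vertices of `G` that are non-adjacent in `G`. -/
def centralGraph {V : Type*} (G : SimpleGraph V) : SimpleGraph (V ⊕ G.edgeSet) where
  Adj x y :=
    match x, y with
    | Sum.inl u, Sum.inl v => u ≠ v ∧ ¬ G.Adj u v
    | Sum.inl u, Sum.inr e => u ∈ (e : Sym2 V)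
    | Sum.inr e, Sum.inl u => u ∈ (e : Sym2 V)
    | Sum.inr _, Sum.inr _ => False
  symm := Std.Symm.mk <| by
    rintro (u | e) (v | f) h
    · exact ⟨h.1.symm, fun a => h.2 a.symm⟩
    · exact h
    · exact h
    · exact h
  loopless := Std.Irrefl.mk <| by
    rintro (u | e) h
    · exact h.1 rfl
    · exact h

/-- The middle graph `M(G)`: obtained from the subdivision graph `S(G)` by joining
each pair of distinct subdivided vertices corresponding to adjacent edges of `G`. -/
def middleGraph {V : Type*} (G : SimpleGraph V) : SimpleGraph (V ⊕ G.edgeSet) where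
  Adj x y :=
    match x, y with
    | Sum.inl u, Sum.inr e => u ∈ (e : Sym2 V)
    | Sum.inr e, Sum.inl u => u ∈ (e : Sym2 V)
    | Sum.inr e, Sum.inr f => e ≠ f ∧ ∃ u, u ∈ (e : Sym2 V) ∧ u ∈ (f : Sym2 V)
    | Sum.inl _, Sum.inl _ => False
  symm := Std.Symm.mk <| by
    rintro (u | e) (v | f) h
    · exact h
    · exact h
    · exact h
    · exact ⟨h.1.symm, h.2.imp fun u hu => ⟨hu.2, hu.1⟩⟩
  loopless := Std.Irrefl.mk <| by
    rintro (u | e) h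
    · exact h
    · exact h.1 rfl

/-- The line graph `L(G)`: vertices are the edges of `G`, two distinct edges being
adjacent when they share an endpoint. -/
def lineG {V : Type*} (G : SimpleGraph V) : SimpleGraph G.edgeSet where
  Adj e f := e ≠ f ∧ ∃ u, u ∈ (e : Sym2 V) ∧ u ∈ (f : Sym2 V)
  symm := ⟨fun e f h => ⟨h.1.symm, h.2.imp fun u hu => ⟨hu.2, hu.1⟩⟩⟩
  loopless := ⟨fun e h => h.1 rfl⟩

/-- The endline graph `G⁺`: to each vertex `v` of `G` we attach a new pendant
vertex; `Sum.inl` is the copy of `V(G)` and `Sum.inr` are the new vertices. -/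
def endlineGraph {V : Type*} (G : SimpleGraph V) : SimpleGraph (V ⊕ V) where
  Adj x y :=
    match x, y with
    | Sum.inl u, Sum.inl v => G.Adj u v
    | Sum.inl u, Sum.inr v => u = v
    | Sum.inr u, Sum.inl v => u = v
    | Sum.inr _, Sum.inr _ => False
  symm := Std.Symm.mk <| by
    rintro (u | u) (v | v) h
    · exact h.symm
    · exact h.symm
    · exact h.symm
    · exact h
  loopless := Std.Irrefl.mk <| by
    rintro (u | u) h
    · exact G.loopless.irrefl u h
    · exact h

/-- The join `G₁ + G₂` of two vertex-disjoint graphs: their disjoint union together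
with all edges between the two vertex sets. -/
def joinGraph {V₁ V₂ : Type*} (G₁ : SimpleGraph V₁) (G₂ : SimpleGraph V₂) :
    SimpleGraph (V₁ ⊕ V₂) where
  Adj x y :=
    match x, y with
    | Sum.inl u, Sum.inl v => G₁.Adj u v
    | Sum.inr u, Sum.inr v => G₂.Adj u v
    | Sum.inl _, Sum.inr _ => True
    | Sum.inr _, Sum.inl _ => True
  symm := Std.Symm.mk <| by
    rintro (u | u) (v | v) h
    · exact h.symm
    · trivial
    · trivial
    · exact h.symm
  loopless := Std.Irrefl.mk <| by
    rintro (u | u) h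
    · exact G₁.loopless.irrefl u h
    · exact G₂.loopless.irrefl u h

/-- The maximum degree `Δ(H)` of a graph (as a supremum of cardinalities of
neighborhoods, which agrees with the usual maximum degree for finite graphs). -/
noncomputable def maxDeg {W : Type*} (H : SimpleGraph W) : ℕ :=
  sSup {k | ∃ v : W, k = (H.neighborSet v).ncard}

/-- A graph is regular if all vertices have the same degree. -/
def IsRegularGraph {W : Type*} (H : SimpleGraph W) : Prop :=
  ∀ u v : W, (H.neighborSet u).ncard = (H.neighborSet v).ncard

/-- The distinguishing number `D(H)`: the least `d` such that `H` admits a vertex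
coloring with `d` colors preserved only by the identity automorphism. -/
noncomputable def distinguishingNumber {W : Type*} (H : SimpleGraph W) : ℕ :=
  sInf {d | ∃ c : W → Fin d, ∀ φ : H ≃g H, (∀ v, c (φ v) = c v) → ∀ v, φ v = v}

/-- The distinguishing index `D'(H)`: the least `d` such that `H` admits an edge
coloring with `d` colors preserved only by the identity automorphism. -/
noncomputable def distinguishingIndex {W : Type*} (H : SimpleGraph W) : ℕ :=
  sInf {d | ∃ c : H.edgeSet → Fin d,
    ∀ φ : H ≃g H, (∀ e, c (φ.mapEdgeSet e) = c e) → ∀ v, φ v = v}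

/-- A proper total coloring of `H` with `d` colors: adjacent vertices, adjacent
edges, and incident vertex/edge pairs receive distinct colors. -/
def IsProperTotalColoring {W : Type*} (H : SimpleGraph W) {d : ℕ}
    (f : W ⊕ H.edgeSet → Fin d) : Prop :=
  (∀ u v : W, H.Adj u v → f (Sum.inl u) ≠ f (Sum.inl v)) ∧
  (∀ e e' : H.edgeSet, e ≠ e' → (∃ u, u ∈ (e : Sym2 W) ∧ u ∈ (e' : Sym2 W)) →
    f (Sum.inr e) ≠ f (Sum.inr e')) ∧
  (∀ (v : W) (e : H.edgeSet), v ∈ (e : Sym2 W) → f (Sum.inl v) ≠ f (Sum.inr e))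

/-- An automorphism `φ` preserves a total coloring `f`. -/
def PreservesTotalColoring {W : Type*} (H : SimpleGraph W) {d : ℕ}
    (f : W ⊕ H.edgeSet → Fin d) (φ : H ≃g H) : Prop :=
  (∀ v : W, f (Sum.inl (φ v)) = f (Sum.inl v)) ∧
  (∀ e : H.edgeSet, f (Sum.inr (φ.mapEdgeSet e)) = f (Sum.inr e))

/-- The total chromatic number `χ''(H)`. -/
noncomputable def totalChromaticNumber {W : Type*} (H : SimpleGraph W) : ℕ :=
  sInf {d | ∃ f : W ⊕ H.edgeSet → Fin d, IsProperTotalColoring H f}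

/-- The total distinguishing chromatic number `χ''_D(H)`: the least `d` such that
`H` has a proper total coloring with `d` colors preserved only by the identity. -/
noncomputable def totalDistinguishingChromaticNumber {W : Type*} (H : SimpleGraph W) : ℕ :=
  sInf {d | ∃ f : W ⊕ H.edgeSet → Fin d, IsProperTotalColoring H f ∧
    ∀ φ : H ≃g H, PreservesTotalColoring H f φ → ∀ v, φ v = v}

/-- The color class `C_H(u)` of a vertex under a total coloring: the color of `u`
together with the colors of the edges incident to `u`. -/
def totalColorClass {W : Type*} (H : SimpleGraph W) {d : ℕ}
    (f : W ⊕ H.edgeSet → Fin d) (u : W) : Set (Fin d) :=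
  {f (Sum.inl u)} ∪ {x | ∃ e : H.edgeSet, u ∈ (e : Sym2 W) ∧ x = f (Sum.inr e)}

/-- An AVD-total coloring: a proper total coloring in which adjacent vertices have
distinct color classes. -/
def IsAVDTotalColoring {W : Type*} (H : SimpleGraph W) {d : ℕ}
    (f : W ⊕ H.edgeSet → Fin d) : Prop :=
  IsProperTotalColoring H f ∧
  ∀ u v : W, H.Adj u v → totalColorClass H f u ≠ totalColorClass H f v

/-- The AVD-total chromatic number `χ''ₐ(H)`. -/
noncomputable def avdTotalChromaticNumber {W : Type*} (H : SimpleGraph W) : ℕ :=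
  sInf {d | ∃ f : W ⊕ H.edgeSet → Fin d, IsAVDTotalColoring H f}

/-- A total dominator coloring: a proper vertex coloring such that every vertex is
adjacent to every vertex of some (nonempty) color class. -/
def IsTotalDominatorColoring {W : Type*} (H : SimpleGraph W) {d : ℕ}
    (c : W → Fin d) : Prop :=
  (∀ u v : W, H.Adj u v → c u ≠ c v) ∧
  (∀ v : W, ∃ i : Fin d, (∃ w, c w = i) ∧ ∀ w, c w = i → H.Adj v w)

/-- The total dominator chromatic number `χᵗ_d(H)`. -/
noncomputable def tdChromaticNumber {W : Type*} (H : SimpleGraph W) : ℕ :=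
  sInf {d | ∃ c : W → Fin d, IsTotalDominatorColoring H c}


section Aux
open SimpleGraph

variable {V : Type*} (G : SimpleGraph V)



lemma cg_edge_rep (e : G.edgeSet) : ∃ a b : V, (e : Sym2 V) = s(a,b) ∧ G.Adj a b := by
  obtain ⟨z, hz⟩ := e
  induction z using Sym2.ind with
  | _ a b => exact ⟨a, b, rfl, hz⟩

lemma cg_edge_rep_mem (e : G.edgeSet) {u : V} (hu : u ∈ (e : Sym2 V)) :
    ∃ q : V, (e : Sym2 V) = s(u,q) ∧ G.Adj u q := by
  obtain ⟨a, b, hab, hadj⟩ := cg_edge_rep G e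
  rw [hab] at hu ⊢
  rcases Sym2.mem_iff.mp hu with rfl | rfl
  · exact ⟨b, rfl, hadj⟩
  · exact ⟨a, Sym2.eq_swap, hadj.symm⟩

lemma cg_edge_cases (E : (centralGraph G).edgeSet) :
    (∃ u v : V, (E : Sym2 (V ⊕ G.edgeSet)) = s(Sum.inl u, Sum.inl v) ∧ u ≠ v ∧ ¬ G.Adj u v) ∨
    (∃ (u q : V) (e : G.edgeSet), (E : Sym2 (V ⊕ G.edgeSet)) = s(Sum.inl u, Sum.inr e) ∧
      (e : Sym2 V) = s(u,q) ∧ G.Adj u q) := by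
  obtain ⟨z, hz⟩ := E
  induction z using Sym2.ind with
  | _ x y =>
    match x, y, hz with
    | Sum.inl u, Sum.inl v, hz => exact Or.inl ⟨u, v, rfl, hz⟩
    | Sum.inl u, Sum.inr e, hz =>
      obtain ⟨q, hq, hadj⟩ := cg_edge_rep_mem G e hz
      exact Or.inr ⟨u, q, e, rfl, hq, hadj⟩
    | Sum.inr e, Sum.inl u, hz =>
      obtain ⟨q, hq, hadj⟩ := cg_edge_rep_mem G e hz
      exact Or.inr ⟨u, q, e, Sym2.eq_swap, hq, hadj⟩

open Classical in
noncomputable def halfInner {V : Type*} (G : SimpleGraph V) {d : ℕ} (vc : V → Fin d)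
    (col : V → V → Fin d) (u : V) : Sym2 V → Fin d :=
  Sym2.lift ⟨fun a b => if a = u then col u b else if b = u then col u a else vc u, by
    intro a b
    by_cases ha : a = u <;> by_cases hb : b = u <;> simp [ha, hb]⟩

lemma halfInner_left {V : Type*} (G : SimpleGraph V) {d : ℕ} (vc : V → Fin d)
    (col : V → V → Fin d) (u b : V) : halfInner G vc col u s(u, b) = col u b := by
  simp [halfInner]

open Classical in
noncomputable def Fc {V : Type*} (G : SimpleGraph V) {d : ℕ} (vc : V → Fin d)
    (col : V → V → Fin d) (dflt : Fin d) :
    V ⊕ G.edgeSet → V ⊕ G.edgeSet → Fin d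
  | Sum.inl u, Sum.inl v => if G.Adj u v ∨ u = v then dflt else col u v
  | Sum.inl u, Sum.inr e => halfInner G vc col u e
  | Sum.inr e, Sum.inl u => halfInner G vc col u e
  | Sum.inr _, Sum.inr _ => dflt

lemma cg_construction {V : Type*} (G : SimpleGraph V) {d : ℕ}
    (vc : V → Fin d) (wc : G.edgeSet → Fin d) (col : V → V → Fin d)
    (P1 : ∀ ⦃u v w : V⦄, v ≠ u → w ≠ u → col u v = col u w → v = w)
    (P2 : ∀ ⦃u v : V⦄, v ≠ u → col u v ≠ vc u)
    (P3 : ∀ ⦃u v : V⦄, G.Adj u v → col u v ≠ col v u)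
    (P4 : ∀ ⦃u v : V⦄, u ≠ v → ¬ G.Adj u v → col u v = col v u)
    (P6 : Function.Injective vc)
    (P7 : ∀ (u : V) (e : G.edgeSet), u ∈ (e : Sym2 V) → vc u ≠ wc e)
    (P8 : ∀ (e : G.edgeSet) (u q : V), (e : Sym2 V) = s(u,q) → wc e ≠ col u q)
    (P9 : ∀ φ : centralGraph G ≃g centralGraph G,
      (∀ x, Sum.elim vc wc (φ x) = Sum.elim vc wc x) →
      ∀ (e : G.edgeSet) (v : V), φ (Sum.inr e) ≠ Sum.inl v)
    (hd : 0 < d) :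
    ∃ f : (V ⊕ G.edgeSet) ⊕ (centralGraph G).edgeSet → Fin d,
      IsProperTotalColoring (centralGraph G) f ∧
      ∀ φ : centralGraph G ≃g centralGraph G,
        PreservesTotalColoring (centralGraph G) f φ → ∀ x, φ x = x := by
  classical
  set dflt : Fin d := ⟨0, hd⟩ with hdflt
  have Fsym : ∀ x y, Fc G vc col dflt x y = Fc G vc col dflt y x := by
    rintro (u | e) (v | f)
    · show (if G.Adj u v ∨ u = v then dflt else col u v)
        = (if G.Adj v u ∨ v = u then dflt else col v u)
      by_cases h : G.Adj u v ∨ u = v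
      · have h' : G.Adj v u ∨ v = u := by
          rcases h with h | h; exacts [Or.inl h.symm, Or.inr h.symm]
        rw [if_pos h, if_pos h']
      · push_neg at h
        have c1 : ¬ (G.Adj u v ∨ u = v) := by push_neg; exact h
        have c2 : ¬ (G.Adj v u ∨ v = u) := by
          push_neg; exact ⟨fun a => h.1 a.symm, fun a => h.2 a.symm⟩
        rw [if_neg c1, if_neg c2]
        exact P4 h.2 h.1
    · rfl
    · rfl
    · rfl
  set F2 : Sym2 (V ⊕ G.edgeSet) → Fin d :=
    Sym2.lift ⟨Fc G vc col dflt, Fsym⟩ with hF2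
  set f : (V ⊕ G.edgeSet) ⊕ (centralGraph G).edgeSet → Fin d :=
    Sum.elim (Sum.elim vc wc) (fun E => F2 (E : Sym2 (V ⊕ G.edgeSet))) with hf
  have hfull : ∀ u v : V, u ≠ v → ¬ G.Adj u v →
      F2 s(Sum.inl u, Sum.inl v) = col u v := by
    intro u v hne hnadj
    show Fc G vc col dflt (Sum.inl u) (Sum.inl v) = col u v
    exact if_neg (by push_neg; exact ⟨hnadj, hne⟩)
  have hhalf : ∀ (u q : V) (e : G.edgeSet), (e : Sym2 V) = s(u,q) →
      F2 s(Sum.inl u, Sum.inr e) = col u q := by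
    intro u q e he
    show halfInner G vc col u (e : Sym2 V) = col u q
    rw [he, halfInner_left]
  have slot : ∀ (E : (centralGraph G).edgeSet) (w : V),
      Sum.inl w ∈ (E : Sym2 (V ⊕ G.edgeSet)) → ∃ p : V, p ≠ w ∧
      F2 (E : Sym2 (V ⊕ G.edgeSet)) = col w p ∧
      ((¬ G.Adj w p ∧ (E : Sym2 (V ⊕ G.edgeSet)) = s(Sum.inl w, Sum.inl p)) ∨
       (∃ e : G.edgeSet, (E : Sym2 (V ⊕ G.edgeSet)) = s(Sum.inl w, Sum.inr e) ∧
         (e : Sym2 V) = s(w,p) ∧ G.Adj w p)) := by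
    intro E w hw
    rcases cg_edge_cases G E with ⟨u, v, hE, hne, hnadj⟩ | ⟨u, q, e, hE, he, hadj⟩
    · rw [hE] at hw ⊢
      rcases Sym2.mem_iff.mp hw with h | h
      · obtain rfl : w = u := Sum.inl.inj h
        exact ⟨v, fun hvw => hne hvw.symm, hfull w v hne hnadj, Or.inl ⟨hnadj, rfl⟩⟩
      · obtain rfl : w = v := Sum.inl.inj h
        refine ⟨u, hne, ?_, Or.inl ⟨fun ha => hnadj ha.symm, Sym2.eq_swap⟩⟩
        rw [hfull u w hne hnadj]
        exact P4 hne hnadj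
    · rw [hE] at hw ⊢
      rcases Sym2.mem_iff.mp hw with h | h
      · obtain rfl : w = u := Sum.inl.inj h
        exact ⟨q, hadj.ne', hhalf w q e he, Or.inr ⟨e, rfl, he, hadj⟩⟩
      · exact absurd h (by simp)
  refine ⟨f, ⟨?_, ?_, ?_⟩, ?_⟩
  · rintro (u | e) (v | e') hadj
    · intro hc
      exact hadj.1 (P6 hc)
    · exact P7 u e' hadj
    · exact fun hc => P7 v e hadj hc.symm
    · exact False.elim hadj
  · rintro E E' hne ⟨x, hx, hx'⟩
    match x with
    | Sum.inl w =>
      obtain ⟨p, hp, hcol, halt⟩ := slot E w hx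
      obtain ⟨p', hp', hcol', halt'⟩ := slot E' w hx'
      show F2 _ ≠ F2 _
      rw [hcol, hcol']
      intro hc
      obtain rfl : p = p' := P1 hp hp' hc
      apply hne
      apply Subtype.ext
      rcases halt with ⟨h1, hE⟩ | ⟨e, hE, he, ha⟩ <;>
        rcases halt' with ⟨h1', hE'⟩ | ⟨e', hE', he', ha'⟩
      · rw [hE, hE']
      · exact absurd ha' h1
      · exact absurd ha h1'
      · rw [hE, hE']
        obtain rfl : e = e' := Subtype.ext (by rw [he, he'])
        rfl
    | Sum.inr e =>
      rcases cg_edge_cases G E with ⟨u, v, hE, _, _⟩ | ⟨u, q, e₀, hE, he, hadj⟩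
      · rw [hE] at hx; simp at hx
      rcases cg_edge_cases G E' with ⟨u', v', hE', _, _⟩ | ⟨u', q', e₀', hE', he', hadj'⟩
      · rw [hE'] at hx'; simp at hx'
      rw [hE] at hx; rw [hE'] at hx'
      have h1 : e₀ = e := by
        rcases Sym2.mem_iff.mp hx with h | h
        · exact absurd h (by simp)
        · exact (Sum.inr.inj h).symm
      have h2 : e₀' = e := by
        rcases Sym2.mem_iff.mp hx' with h | h
        · exact absurd h (by simp)
        · exact (Sum.inr.inj h).symm
      rw [h1] at hE he; rw [h2] at hE' he'
      have huu' : u ≠ u' := by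
        rintro rfl
        exact hne (Subtype.ext (by rw [hE, hE']))
      have h1' : u' ∈ (e : Sym2 V) := by rw [he']; exact Sym2.mem_mk_left _ _
      have h2' : q' ∈ (e : Sym2 V) := by rw [he']; exact Sym2.mem_mk_right _ _
      rw [he] at h1' h2'
      have hqu' : q = u' := by
        rcases Sym2.mem_iff.mp h1' with h | h
        · exact absurd h.symm huu'
        · exact h.symm
      have hq'u : q' = u := by
        rcases Sym2.mem_iff.mp h2' with h | h
        · exact h
        · exfalso; rw [h, hqu'] at hadj'; exact hadj'.ne rfl
      show F2 _ ≠ F2 _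
      rw [hE, hE', hhalf u q e he, hhalf u' q' e he', hqu', hq'u]
      exact P3 (hqu' ▸ hadj)
  · rintro (w | e) E hx
    · obtain ⟨p, hp, hcol, _⟩ := slot E w hx
      show vc w ≠ F2 _
      rw [hcol]
      exact fun hc => P2 hp hc.symm
    · rcases cg_edge_cases G E with ⟨u, v, hE, _, _⟩ | ⟨u, q, e₀, hE, he, hadj⟩
      · rw [hE] at hx; simp at hx
      · rw [hE] at hx
        have h1 : e₀ = e := by
          rcases Sym2.mem_iff.mp hx with h | h
          · exact absurd h (by simp)
          · exact (Sum.inr.inj h).symm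
        rw [h1] at hE he
        show wc e ≠ F2 _
        rw [hE, hhalf u q e he]
        exact P8 e u q he
  · intro φ hpres
    have hvcol : ∀ x, Sum.elim vc wc (φ x) = Sum.elim vc wc x := hpres.1
    have hnoswap : ∀ (e : G.edgeSet) (v : V), φ (Sum.inr e) ≠ Sum.inl v := P9 φ hvcol
    have hvcolsymm : ∀ x, Sum.elim vc wc (φ.symm x) = Sum.elim vc wc x := by
      intro x
      have h := hvcol (φ.symm x)
      rw [RelIso.apply_symm_apply] at h
      exact h.symm
    have hnoswap' := P9 φ.symm hvcolsymm
    have hV : ∀ v : V, φ (Sum.inl v) = Sum.inl v := by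
      intro v
      match hφv : φ (Sum.inl v) with
      | Sum.inl v' =>
        have h := hvcol (Sum.inl v)
        rw [hφv] at h
        simp only [Sum.elim_inl] at h
        rw [P6 h]
      | Sum.inr e =>
        exfalso
        apply hnoswap' e v
        rw [← hφv, RelIso.symm_apply_apply]
    intro x
    match x with
    | Sum.inl v => exact hV v
    | Sum.inr e =>
      match hφe : φ (Sum.inr e) with
      | Sum.inl v => exact absurd hφe (hnoswap e v)
      | Sum.inr e' =>
        obtain ⟨a, b, hab, hadj⟩ := cg_edge_rep G e
        have hne : a ≠ b := hadj.ne
        have hadja : (centralGraph G).Adj (Sum.inl a) (Sum.inr e) := by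
          show a ∈ (e : Sym2 V); rw [hab]; exact Sym2.mem_mk_left _ _
        have hadjb : (centralGraph G).Adj (Sum.inl b) (Sum.inr e) := by
          show b ∈ (e : Sym2 V); rw [hab]; exact Sym2.mem_mk_right _ _
        have ha' : a ∈ (e' : Sym2 V) := by
          have h := φ.map_adj_iff.mpr hadja
          rw [hV a, hφe] at h
          exact h
        have hb' : b ∈ (e' : Sym2 V) := by
          have h := φ.map_adj_iff.mpr hadjb
          rw [hV b, hφe] at h
          exact h
        have he' : (e' : Sym2 V) = s(a,b) := (Sym2.mem_and_mem_iff hne).mp ⟨ha', hb'⟩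
        have : e' = e := Subtype.ext (by rw [he', hab])
        rw [this]

lemma cg_schemeA {V : Type*} [Fintype V] (G : SimpleGraph V) (hconn : G.Connected)
    (hn : Fintype.card V ≤ 3) :
    ∃ f : (V ⊕ G.edgeSet) ⊕ (centralGraph G).edgeSet → Fin (Fintype.card V + 1),
      IsProperTotalColoring (centralGraph G) f ∧
      ∀ φ : centralGraph G ≃g centralGraph G,
        PreservesTotalColoring (centralGraph G) f φ → ∀ x, φ x = x := by
  classical
  set n := Fintype.card V with hnn
  set ι : V ≃ Fin n := Fintype.equivFin V with hι
  set vc : V → Fin (n+1) := fun v => (ι v).castSucc with hvc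
  set wc : G.edgeSet → Fin (n+1) := fun _ => Fin.last n with hwc
  set col : V → V → Fin (n+1) := fun u v => if G.Adj u v then (ι v).castSucc else Fin.last n
    with hcol
  -- every vertex has at most one non-neighbor
  have H1 : ∀ u v w : V, v ≠ u → w ≠ u → ¬ G.Adj u v → ¬ G.Adj u w → v = w := by
    intro u v w hvu hwu hav haw
    by_contra hvw
    obtain ⟨p⟩ := hconn.preconnected u v
    obtain ⟨x, hx⟩ : ∃ x, G.Adj u x := by
      cases p with
      | nil => exact absurd rfl hvu.symm
      | cons h _ => exact ⟨_, h⟩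
    have hxu : x ≠ u := hx.ne'
    have hxv : x ≠ v := fun h => hav (h ▸ hx)
    have hxw : x ≠ w := fun h => haw (h ▸ hx)
    have hcard : ({u, v, w, x} : Finset V).card = 4 := by
      rw [Finset.card_insert_of_notMem (by simp [hvu.symm, hwu.symm, hxu.symm]),
        Finset.card_insert_of_notMem (by simp [hvw, hxv.symm]),
        Finset.card_insert_of_notMem (by simp [hxw.symm]), Finset.card_singleton]
    have := Finset.card_le_univ ({u, v, w, x} : Finset V)
    rw [hcard] at this
    omega
  have hlastne : ∀ a : Fin n, a.castSucc ≠ Fin.last n := fun a => (Fin.castSucc_lt_last a).ne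
  apply cg_construction G vc wc col
  · intro u v w hvu hwu hc
    by_cases h1 : G.Adj u v <;> by_cases h2 : G.Adj u w <;>
        simp only [hcol, if_pos, if_neg, h1, h2, if_true, if_false] at hc
    · exact ι.injective (Fin.castSucc_injective n hc)
    · exact absurd hc (hlastne _)
    · exact absurd hc.symm (hlastne _)
    · exact H1 u v w hvu hwu h1 h2
  · intro u v hvu
    by_cases h1 : G.Adj u v <;> simp only [hcol, h1, if_true, if_false, hvc]
    · intro hc
      exact h1.ne' (ι.injective (Fin.castSucc_injective n hc))
    · exact fun hc => hlastne _ hc.symm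
  · intro u v hadj
    simp only [hcol, if_pos hadj, if_pos hadj.symm]
    intro hc
    exact hadj.ne' (ι.injective (Fin.castSucc_injective n hc))
  · intro u v hne hnadj
    have h2 : ¬ G.Adj v u := fun h => hnadj h.symm
    simp only [hcol, if_neg hnadj, if_neg h2]
  · intro a b hab
    exact ι.injective (Fin.castSucc_injective n hab)
  · intro u e _
    exact hlastne (ι u)
  · intro e u q he
    have hadj : G.Adj u q := by
      have h2 := e.2
      rw [he] at h2
      exact h2
    simp only [hcol, if_pos hadj]
    exact fun hc => hlastne _ hc.symm
  · intro φ hvcol e v hc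
    have h := hvcol (Sum.inr e)
    rw [hc] at h
    simp only [Sum.elim_inl, Sum.elim_inr, hvc, hwc] at h
    exact hlastne _ h
  · omega

lemma cg_iso_ncard {W W' : Type*} {H : SimpleGraph W} {H' : SimpleGraph W'}
    (φ : H ≃g H') (x : W) :
    (H'.neighborSet (φ x)).ncard = (H.neighborSet x).ncard := by
  have h : H'.neighborSet (φ x) = φ '' H.neighborSet x := by
    ext y
    simp only [SimpleGraph.mem_neighborSet, Set.mem_image]
    constructor
    · intro h
      refine ⟨φ.symm y, ?_, by simp⟩
      have := φ.symm.map_adj_iff.mpr h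
      simpa using this
    · rintro ⟨z, hz, rfl⟩
      exact φ.map_adj_iff.mpr hz
  rw [h, Set.ncard_image_of_injective _ (EquivLike.injective φ)]

lemma cg_deg_inr {V : Type*} [Fintype V] (G : SimpleGraph V) (e : G.edgeSet) :
    ((centralGraph G).neighborSet (Sum.inr e)).ncard = 2 := by
  obtain ⟨a, b, hab, hadj⟩ := cg_edge_rep G e
  have h : (centralGraph G).neighborSet (Sum.inr e) = {Sum.inl a, Sum.inl b} := by
    ext x
    match x with
    | Sum.inl u =>
      simp only [SimpleGraph.mem_neighborSet, Set.mem_insert_iff, Set.mem_singleton_iff]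
      change u ∈ (e : Sym2 V) ↔ _
      rw [hab, Sym2.mem_iff]
      constructor
      · rintro (rfl | rfl); exacts [Or.inl rfl, Or.inr rfl]
      · rintro (h | h) <;> simp_all
    | Sum.inr f =>
      simp only [SimpleGraph.mem_neighborSet, Set.mem_insert_iff, Set.mem_singleton_iff]
      constructor
      · intro h; exact absurd h (fun h => h)
      · rintro (h | h) <;> simp_all
  rw [h, Set.ncard_pair (by simpa using hadj.ne)]

lemma cg_deg_inl {V : Type*} [Fintype V] (G : SimpleGraph V) (v : V) :
    ((centralGraph G).neighborSet (Sum.inl v)).ncard = Fintype.card V - 1 := by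
  classical
  set β : V → V ⊕ G.edgeSet := fun u =>
    if h : G.Adj v u then Sum.inr ⟨s(v,u), h⟩ else Sum.inl u with hβ
  have himg : (centralGraph G).neighborSet (Sum.inl v) = β '' {u | u ≠ v} := by
    ext x
    constructor
    · intro hx
      match x, hx with
      | Sum.inl u, hx =>
        obtain ⟨hne, hnadj⟩ := (show v ≠ u ∧ ¬ G.Adj v u from hx)
        exact ⟨u, hne.symm, by simp [hβ, hnadj]⟩
      | Sum.inr e, hx =>
        have hmem : v ∈ (e : Sym2 V) := hx
        obtain ⟨a, b, hab, hadj⟩ := cg_edge_rep G e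
        rw [hab, Sym2.mem_iff] at hmem
        rcases hmem with rfl | rfl
        · refine ⟨b, hadj.ne', ?_⟩
          simp only [hβ, dif_pos hadj]
          exact congrArg Sum.inr (Subtype.ext hab.symm)
        · refine ⟨a, hadj.ne, ?_⟩
          simp only [hβ, dif_pos hadj.symm]
          refine congrArg Sum.inr (Subtype.ext ?_)
          rw [hab]; exact Sym2.eq_swap
    · rintro ⟨u, hu, rfl⟩
      by_cases h : G.Adj v u
      · simp only [hβ, dif_pos h]
        exact Sym2.mem_mk_left v u
      · simp only [hβ, dif_neg h]
        exact ⟨fun he => hu he.symm, h⟩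
  have hinj : Set.InjOn β {u | u ≠ v} := by
    intro a ha b hb hab
    by_cases h1 : G.Adj v a <;> by_cases h2 : G.Adj v b <;>
      simp only [hβ] at hab <;>
      [rw [dif_pos h1, dif_pos h2] at hab; rw [dif_pos h1, dif_neg h2] at hab;
       rw [dif_neg h1, dif_pos h2] at hab; rw [dif_neg h1, dif_neg h2] at hab]
    · have := Subtype.ext_iff.mp (Sum.inr.inj hab)
      simp only [Sym2.eq_iff] at this
      rcases this with ⟨-, rfl⟩ | ⟨rfl, rfl⟩ <;> rfl
    · exact absurd hab (by simp)
    · exact absurd hab (by simp)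
    · exact Sum.inl.inj hab
  rw [himg, Set.ncard_image_of_injOn hinj]
  have h0 : {u | u ≠ v} = ({v} : Set V)ᶜ := by ext u; simp
  rw [h0]
  have h2 := Set.ncard_add_ncard_compl ({v} : Set V)
  have h3 : ({v} : Set V).ncard = 1 := Set.ncard_singleton v
  have hcard : Nat.card V = Fintype.card V := Nat.card_eq_fintype_card
  omega

lemma cg_schemeB {V : Type*} [Fintype V] (G : SimpleGraph V) (hn : 4 ≤ Fintype.card V) :
    ∃ f : (V ⊕ G.edgeSet) ⊕ (centralGraph G).edgeSet → Fin (Fintype.card V + 1),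
      IsProperTotalColoring (centralGraph G) f ∧
      ∀ φ : centralGraph G ≃g centralGraph G,
        PreservesTotalColoring (centralGraph G) f φ → ∀ x, φ x = x := by
  classical
  set n := Fintype.card V with hnn
  set ι : V ≃ Fin n := Fintype.equivFin V with hι
  set ix : V → ℕ := fun v => (ι v : ℕ) with hix
  have hixlt : ∀ v, ix v < n := fun v => (ι v).isLt
  have hixinj : ∀ {u v : V}, ix u = ix v → u = v := by
    intro u v h
    exact ι.injective (Fin.val_injective h)
  set T : V → V → Finset (Fin n) := fun u v =>
    Finset.univ.filter (fun s => ι v < s ∧ (s = ι u ∨ (s < ι u ∧ G.Adj (ι.symm s) u))) with hT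
  have hTmem : ∀ u v : V, ι v < ι u → ι u ∈ T u v := by
    intro u v h
    simp only [hT, Finset.mem_filter, Finset.mem_univ, true_and]
    refine ⟨h, Or.inl ?_⟩
    trivial
  set nxt : V → V → ℕ := fun u v =>
    if h : ι v < ι u then ((T u v).min' ⟨ι u, hTmem u v h⟩ : ℕ) else ix v with hnxt
  have nxt_gt : ∀ u v : V, ι v < ι u → ix v < nxt u v ∧
      (nxt u v = ix u ∨ (nxt u v < ix u ∧ ∃ w, ix w = nxt u v ∧ G.Adj w u)) := by
    intro u v h
    have hmem := Finset.min'_mem (T u v) ⟨ι u, hTmem u v h⟩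
    simp only [hT, Finset.mem_filter, Finset.mem_univ, true_and] at hmem
    obtain ⟨h1, h2⟩ := hmem
    have hval : nxt u v = ((T u v).min' ⟨ι u, hTmem u v h⟩ : ℕ) := by
      simp only [hnxt, dif_pos h]
    rw [hval]
    refine ⟨Fin.lt_def.mp h1, ?_⟩
    rcases h2 with h2 | ⟨h2, h3⟩
    · exact Or.inl (congrArg Fin.val h2)
    · refine Or.inr ⟨Fin.lt_def.mp h2, ι.symm _, ?_, h3⟩
      simp only [hix, Equiv.apply_symm_apply]
      rfl
  have nxt_min : ∀ (u v : V), ι v < ι u → ∀ s : Fin n, ι v < s →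
      (s = ι u ∨ (s < ι u ∧ G.Adj (ι.symm s) u)) → nxt u v ≤ (s : ℕ) := by
    intro u v h s hs1 hs2
    have hval : nxt u v = ((T u v).min' ⟨ι u, hTmem u v h⟩ : ℕ) := by
      simp only [hnxt, dif_pos h]
    rw [hval]
    exact Fin.le_def.mp (Finset.min'_le _ _ (by
      simp only [hT, Finset.mem_filter, Finset.mem_univ, true_and]
      exact ⟨hs1, hs2⟩))
  have nxt_lt : ∀ u v : V, ι v < ι u → nxt u v < n := by
    intro u v h
    rcases (nxt_gt u v h).2 with h2 | h2
    · rw [h2]; exact hixlt u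
    · exact lt_trans h2.1 (hixlt u)
  set cnd : V → V → Prop := fun u v => G.Adj u v ∧ ι v < ι u with hcnd
  set g : V → V → ℕ := fun u v => if cnd u v then nxt u v else ix v with hg
  have hglt : ∀ u v : V, g u v < n := by
    intro u v
    simp only [hg]
    split
    · rename_i h
      exact nxt_lt u v h.2
    · exact hixlt v
  have hm : 0 < n + 1 := Nat.succ_pos n
  set colB : V → V → Fin (n+1) := fun u v =>
    ⟨(ix u + g u v + 1) % (n+1), Nat.mod_lt _ hm⟩ with hcolB
  set vcB : V → Fin (n+1) := fun v => ⟨ix v, lt_trans (hixlt v) (Nat.lt_succ_self n)⟩ with hvcB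
  have modsub : ∀ z : ℕ, z < 2*(n+1) → z % (n+1) = if z < n+1 then z else z - (n+1) := by
    intro z hz
    split
    · exact Nat.mod_eq_of_lt (by assumption)
    · rw [Nat.mod_eq_sub_mod (by omega)]
      exact Nat.mod_eq_of_lt (by omega)
  have modcancel : ∀ a x y : ℕ, a < n+1 → x < n+1 → y < n+1 →
      (a + x + 1) % (n+1) = (a + y + 1) % (n+1) → x = y := by
    intro a x y ha hx hy h
    rw [modsub _ (by omega), modsub _ (by omega)] at h
    split_ifs at h <;> omega
  -- the bad set and the w-colors
  set bad : G.edgeSet → Finset (Fin (n+1)) := fun e =>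
    Finset.univ.filter
      (fun c => ∃ u q : V, (e : Sym2 V) = s(u,q) ∧ (c = vcB u ∨ c = colB u q)) with hbad
  have bad_mem : ∀ (e : G.edgeSet) (u q : V), (e : Sym2 V) = s(u,q) →
      vcB u ∈ bad e ∧ colB u q ∈ bad e := by
    intro e u q he
    constructor <;> simp only [hbad, Finset.mem_filter, Finset.mem_univ, true_and]
    · exact ⟨u, q, he, Or.inl rfl⟩
    · exact ⟨u, q, he, Or.inr rfl⟩
  have bad_card : ∀ e : G.edgeSet, (bad e).card ≤ 4 := by
    intro e
    obtain ⟨a, b, hab, -⟩ := cg_edge_rep G e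
    have hsub : bad e ⊆ {vcB a, colB a b, vcB b, colB b a} := by
      intro c hc
      simp only [hbad, Finset.mem_filter, Finset.mem_univ, true_and] at hc
      obtain ⟨u, q, he, hor⟩ := hc
      rw [hab, Sym2.eq_iff] at he
      simp only [Finset.mem_insert, Finset.mem_singleton]
      rcases he with ⟨rfl, rfl⟩ | ⟨rfl, rfl⟩
      · rcases hor with rfl | rfl
        exacts [Or.inl rfl, Or.inr (Or.inl rfl)]
      · rcases hor with rfl | rfl
        exacts [Or.inr (Or.inr (Or.inl rfl)), Or.inr (Or.inr (Or.inr rfl))]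
    refine le_trans (Finset.card_le_card hsub) ?_
    refine le_trans (Finset.card_insert_le _ _) ?_
    have h1 := Finset.card_insert_le (colB a b) ({vcB b, colB b a} : Finset (Fin (n+1)))
    have h2 := Finset.card_insert_le (vcB b) ({colB b a} : Finset (Fin (n+1)))
    have h3 : ({colB b a} : Finset (Fin (n+1))).card = 1 := Finset.card_singleton _
    omega
  have good_ne : ∀ e : G.edgeSet, (Finset.univ \ bad e).Nonempty := by
    intro e
    rw [← Finset.card_pos, Finset.card_sdiff_of_subset (Finset.subset_univ _)]
    have h1 := bad_card e
    have h2 : (Finset.univ : Finset (Fin (n+1))).card = n+1 := by simp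
    omega
  set wcB : G.edgeSet → Fin (n+1) := fun e => (Finset.univ \ bad e).min' (good_ne e) with hwcB
  have wcB_not_bad : ∀ e, wcB e ∉ bad e := by
    intro e
    have h := Finset.min'_mem _ (good_ne e)
    rw [Finset.mem_sdiff] at h
    exact h.2
  apply cg_construction G vcB wcB colB
  · -- P1
    intro u v w hvu hwu hc
    have hg' : g u v = g u w := by
      refine modcancel (ix u) _ _ ?_ ?_ ?_ (congrArg Fin.val hc)
      · have := hixlt u; omega
      · have := hglt u v; omega
      · have := hglt u w; omega
    have mixed : ∀ v w : V, w ≠ u → cnd u v → ¬ cnd u w → g u v ≠ g u w := by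
      intro v w hwu' hcv hcw
      simp only [hg, if_pos hcv, if_neg hcw]
      intro hEq
      rcases (nxt_gt u v hcv.2).2 with h2 | ⟨hlt, w', hw', hadjw'⟩
      · exact hwu' (hixinj (hEq.symm.trans h2))
      · have hww' : w' = w := hixinj (hw'.trans hEq)
        apply hcw
        rw [hcnd]
        constructor
        · rw [← hww']; exact hadjw'.symm
        · rw [Fin.lt_def]
          have : ix w < ix u := by omega
          exact this
    by_cases hcv : cnd u v <;> by_cases hcw : cnd u w
    · rcases lt_trichotomy (ι v) (ι w) with hlt | heq | hlt
      · exfalso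
        have hmem : nxt u v ≤ (ι w : ℕ) := by
          refine nxt_min u v hcv.2 (ι w) hlt (Or.inr ⟨hcw.2, ?_⟩)
          rw [Equiv.symm_apply_apply]
          exact hcw.1.symm
        have hguv : g u v = nxt u v := by simp only [hg, if_pos hcv]
        have hguw : g u w = nxt u w := by simp only [hg, if_pos hcw]
        have hgt := (nxt_gt u w hcw.2).1
        have hmem' : nxt u v ≤ ix w := hmem
        rw [hguv, hguw] at hg'
        omega
      · exact ι.injective heq
      · exfalso
        have hmem : nxt u w ≤ (ι v : ℕ) := by
          refine nxt_min u w hcw.2 (ι v) hlt (Or.inr ⟨hcv.2, ?_⟩)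
          rw [Equiv.symm_apply_apply]
          exact hcv.1.symm
        have hguv : g u v = nxt u v := by simp only [hg, if_pos hcv]
        have hguw : g u w = nxt u w := by simp only [hg, if_pos hcw]
        have hgt := (nxt_gt u v hcv.2).1
        have hmem' : nxt u w ≤ ix v := hmem
        rw [hguv, hguw] at hg'
        omega
    · exact absurd hg' (mixed v w hwu hcv hcw)
    · exact absurd hg'.symm (mixed w v hvu hcw hcv)
    · simp only [hg, if_neg hcv, if_neg hcw] at hg'
      exact hixinj hg'
  · -- P2
    intro u v hvu hc
    have hval := congrArg Fin.val hc
    simp only [hcolB, hvcB] at hval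
    have hb1 := hglt u v
    have hb2 := hixlt u
    rw [modsub _ (by omega)] at hval
    split_ifs at hval <;> omega
  · -- P3
    have claim : ∀ u v : V, G.Adj u v → ι u < ι v → colB u v ≠ colB v u := by
      intro u v hadj hlt hc
      have hcv : ¬ cnd u v := by
        rw [hcnd]
        rintro ⟨-, h⟩
        exact absurd hlt (not_lt.mpr (le_of_lt h))
      have hcu : cnd v u := ⟨hadj.symm, hlt⟩
      have h1 : g u v = ix v := by simp only [hg, if_neg hcv]
      have h2 : g v u = nxt v u := by simp only [hg, if_pos hcu]
      have hval := congrArg Fin.val hc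
      simp only [hcolB] at hval
      rw [h1, h2] at hval
      have hval' : (ix v + ix u + 1) % (n+1) = (ix v + nxt v u + 1) % (n+1) := by
        rw [show ix v + ix u = ix u + ix v from Nat.add_comm _ _]
        exact hval
      have heq : ix u = nxt v u := by
        refine modcancel (ix v) _ _ ?_ ?_ ?_ hval'
        · have := hixlt v; omega
        · have := hixlt u; omega
        · have := nxt_lt v u hlt; omega
      have hgt := (nxt_gt v u hlt).1
      omega
    intro u v hadj
    rcases lt_trichotomy (ι u) (ι v) with h | h | h
    · exact claim u v hadj h
    · exact absurd (ι.injective h) hadj.ne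
    · exact fun hc => claim v u hadj.symm h hc.symm
  · -- P4
    intro u v hne hnadj
    have hcv : ¬ cnd u v := by rw [hcnd]; rintro ⟨h, -⟩; exact hnadj h
    have hcu : ¬ cnd v u := by rw [hcnd]; rintro ⟨h, -⟩; exact hnadj h.symm
    apply Fin.ext
    simp only [hcolB, hg, if_neg hcv, if_neg hcu]
    rw [Nat.add_comm (ix u) (ix v)]
  · -- P6
    intro a b hab
    have := congrArg Fin.val hab
    simp only [hvcB] at this
    exact hixinj this
  · -- P7
    intro u e hu hc
    obtain ⟨q, he, -⟩ := cg_edge_rep_mem G e hu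
    exact wcB_not_bad e (hc ▸ (bad_mem e u q he).1)
  · -- P8
    intro e u q he hc
    exact wcB_not_bad e (hc ▸ (bad_mem e u q he).2)
  · -- P9
    intro φ _ e v hc
    have h1 := cg_iso_ncard φ (Sum.inr e : V ⊕ G.edgeSet)
    rw [hc, cg_deg_inl, cg_deg_inr] at h1
    omega
  · omega

lemma cg_exists {V : Type*} [Fintype V] (G : SimpleGraph V) (hconn : G.Connected) :
    ∃ f : (V ⊕ G.edgeSet) ⊕ (centralGraph G).edgeSet → Fin (Fintype.card V + 1),
      IsProperTotalColoring (centralGraph G) f ∧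
      ∀ φ : centralGraph G ≃g centralGraph G,
        PreservesTotalColoring (centralGraph G) f φ → ∀ x, φ x = x := by
  by_cases h : Fintype.card V ≤ 3
  · exact cg_schemeA G hconn h
  · exact cg_schemeB G (by omega)

lemma maxDeg_bddAbove {W : Type*} [Finite W] (H : SimpleGraph W) :
    BddAbove {k | ∃ v : W, k = (H.neighborSet v).ncard} := by
  refine ⟨Nat.card W, ?_⟩
  rintro k ⟨v, rfl⟩
  have h := Set.ncard_le_ncard (Set.subset_univ (H.neighborSet v)) (Set.toFinite _)
  rwa [Set.ncard_univ] at h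

lemma maxDeg_exists {W : Type*} [Finite W] [Nonempty W] (H : SimpleGraph W) :
    ∃ x : W, maxDeg H = (H.neighborSet x).ncard := by
  have hne : {k | ∃ v : W, k = (H.neighborSet v).ncard}.Nonempty :=
    ⟨_, Classical.arbitrary W, rfl⟩
  exact Nat.sSup_mem hne (maxDeg_bddAbove H)

lemma maxDeg_ge {W : Type*} [Finite W] (H : SimpleGraph W) (x : W) :
    (H.neighborSet x).ncard ≤ maxDeg H :=
  le_csSup (maxDeg_bddAbove H) ⟨x, rfl⟩

lemma cg_lower {V : Type*} [Fintype V] [Nonempty V] (G : SimpleGraph V) {d : ℕ}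
    (f : (V ⊕ G.edgeSet) ⊕ (centralGraph G).edgeSet → Fin d)
    (hf : IsProperTotalColoring (centralGraph G) f) :
    maxDeg (centralGraph G) + 1 ≤ d := by
  classical
  obtain ⟨x, hx⟩ := maxDeg_exists (centralGraph G)
  set h : (V ⊕ G.edgeSet) → Fin d := fun y =>
    if hy : (centralGraph G).Adj x y then f (Sum.inr ⟨s(x,y), hy⟩) else f (Sum.inl x) with hh
  have hinj : Set.InjOn h ((centralGraph G).neighborSet x) := by
    intro y hy y' hy' heq
    have hy2 : (centralGraph G).Adj x y := hy
    have hy2' : (centralGraph G).Adj x y' := hy'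
    simp only [hh, dif_pos hy2, dif_pos hy2'] at heq
    by_contra hne
    have hEne : (⟨s(x,y), hy2⟩ : (centralGraph G).edgeSet) ≠ ⟨s(x,y'), hy2'⟩ := by
      intro hE
      apply hne
      have h2 := Subtype.ext_iff.mp hE
      rw [Sym2.eq_iff] at h2
      rcases h2 with ⟨-, h2⟩ | ⟨h1, h2⟩
      · exact h2
      · exact h2.trans h1
    exact hf.2.1 _ _ hEne ⟨x, Sym2.mem_mk_left _ _, Sym2.mem_mk_left _ _⟩ heq
  have hnotmem : f (Sum.inl x) ∉ h '' ((centralGraph G).neighborSet x) := by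
    rintro ⟨y, hy, heq⟩
    have hy2 : (centralGraph G).Adj x y := hy
    simp only [hh, dif_pos hy2] at heq
    exact hf.2.2 x ⟨s(x,y), hy2⟩ (Sym2.mem_mk_left _ _) heq.symm
  have hcard : (insert (f (Sum.inl x)) (h '' ((centralGraph G).neighborSet x))).ncard
      = maxDeg (centralGraph G) + 1 := by
    rw [Set.ncard_insert_of_notMem hnotmem (Set.toFinite _),
      Set.ncard_image_of_injOn hinj, hx]
  have hle : (insert (f (Sum.inl x)) (h '' ((centralGraph G).neighborSet x))).ncard ≤ d := by
    have h1 := Set.ncard_le_ncard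
      (Set.subset_univ (insert (f (Sum.inl x)) (h '' ((centralGraph G).neighborSet x))))
      (Set.toFinite _)
    rwa [Set.ncard_univ, Nat.card_eq_fintype_card, Fintype.card_fin] at h1
  omega

end Aux

/-- For a connected graph `G`,
`Δ(C(G)) + 1 ≤ χ''(C(G)) ≤ χ''_D(C(G)) ≤ Δ(C(G)) + 2`; in particular
`χ''_D(C(G))` equals `Δ(C(G)) + 1` or `Δ(C(G)) + 2`. -/
theorem stmt_11 {V : Type*} [Fintype V] (G : SimpleGraph V)
    (hconn : G.Connected) :
    (maxDeg (centralGraph G) + 1 ≤ totalChromaticNumber (centralGraph G) ∧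
     totalChromaticNumber (centralGraph G) ≤
       totalDistinguishingChromaticNumber (centralGraph G) ∧
     totalDistinguishingChromaticNumber (centralGraph G) ≤
       maxDeg (centralGraph G) + 2) ∧
    (totalDistinguishingChromaticNumber (centralGraph G) = maxDeg (centralGraph G) + 1 ∨
     totalDistinguishingChromaticNumber (centralGraph G) = maxDeg (centralGraph G) + 2) := by
  classical
  have hnV : Nonempty V := hconn.nonempty
  obtain ⟨f0, hf0, hd0⟩ := cg_exists G hconn
  have hSD : (Fintype.card V + 1) ∈
      {d | ∃ f : (V ⊕ G.edgeSet) ⊕ (centralGraph G).edgeSet → Fin d,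
        IsProperTotalColoring (centralGraph G) f ∧
        ∀ φ : centralGraph G ≃g centralGraph G,
          PreservesTotalColoring (centralGraph G) f φ → ∀ v, φ v = v} :=
    ⟨f0, hf0, hd0⟩
  have hdeg : Fintype.card V - 1 ≤ maxDeg (centralGraph G) := by
    obtain ⟨v⟩ := hnV
    have h1 := cg_deg_inl G v
    have h2 := maxDeg_ge (centralGraph G) (Sum.inl v)
    omega
  have hpos : 1 ≤ Fintype.card V := Fintype.card_pos
  have hlow : maxDeg (centralGraph G) + 1 ≤ totalChromaticNumber (centralGraph G) := by
    rw [totalChromaticNumber]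
    refine le_csInf ⟨Fintype.card V + 1, f0, hf0⟩ ?_
    rintro d ⟨f, hf⟩
    exact cg_lower G f hf
  have hmid : totalChromaticNumber (centralGraph G) ≤
      totalDistinguishingChromaticNumber (centralGraph G) := by
    rw [totalChromaticNumber, totalDistinguishingChromaticNumber]
    apply Nat.sInf_le
    obtain ⟨f, hf, -⟩ := Nat.sInf_mem (⟨Fintype.card V + 1, hSD⟩ : Set.Nonempty _)
    exact ⟨f, hf⟩
  have hup : totalDistinguishingChromaticNumber (centralGraph G) ≤
      maxDeg (centralGraph G) + 2 := by
    have h1 : totalDistinguishingChromaticNumber (centralGraph G) ≤ Fintype.card V + 1 :=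
      Nat.sInf_le hSD
    omega
  exact ⟨⟨hlow, hmid, hup⟩, by omega⟩
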